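/- If detailed balance holds on all edges of a finite DAG with unique initial state s_0, and the forward policy P_F sums to 1 over children at each nonterminal state, then the total flow into terminal states equals the flow at the initial state: Σ_{x ∈ X} F(x) = F(s_0). -/
import Mathlib


/-- If detailed balance holds on all edges of a finite DAG with unique
initial state `s0` (no incoming edges) and terminal states `X` (no outgoing edges),
with the forward policy `PF` summing to 1 over children at each nonterminal state and
the backward policy `PB` (`PB s s' = P_B(s|s')`) summing to 1 over parents at each
noninitial state, then the total flow into terminal states equals the flow at the
initial state: `Σ_{x ∈ X} F(x) = F(s0)`. -/
theorem stmt_10 {S : Type*} [Fintype S]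
    (A : S → S → Prop) [DecidableRel A]
    (hacyc : ∀ s, ¬ Relation.TransGen A s s)
    (s0 : S) (hinit : ∀ s, ¬ A s s0)
    (huniq : ∀ s', (∀ s, ¬ A s s') → s' = s0)
    (F : S → ℝ) (hFpos : ∀ s, 0 < F s)
    (PF PB : S → S → ℝ)
    (hPFsum : ∀ s, (∃ s', A s s') →
      ∑ s' ∈ Finset.univ.filter (fun s' => A s s'), PF s s' = 1)
    (hPBsum : ∀ s', s' ≠ s0 →
      ∑ s ∈ Finset.univ.filter (fun s => A s s'), PB s s' = 1)
    (hDB : ∀ s s', A s s' → F s * PF s s' = F s' * PB s s') :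
    ∑ x ∈ Finset.univ.filter (fun x => ∀ s', ¬ A x s'), F x = F s0 := by
  classical
  -- total edge flow
  set T : ℝ := ∑ s : S, ∑ s' : S, if A s s' then F s * PF s s' else 0 with hT
  have hT1 : T = ∑ s ∈ Finset.univ.filter (fun s => ∃ s', A s s'), F s := by
    rw [hT, Finset.sum_filter]
    refine Finset.sum_congr rfl (fun s _ => ?_)
    by_cases h : ∃ s', A s s'
    · rw [if_pos h]
      have := hPFsum s h
      calc ∑ s' : S, (if A s s' then F s * PF s s' else 0)
          = ∑ s' ∈ Finset.univ.filter (fun s' => A s s'), F s * PF s s' := by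
            rw [Finset.sum_filter]
        _ = F s * ∑ s' ∈ Finset.univ.filter (fun s' => A s s'), PF s s' := by
            rw [Finset.mul_sum]
        _ = F s := by rw [this, mul_one]
    · rw [if_neg h]
      push_neg at h
      exact Finset.sum_eq_zero (fun s' _ => if_neg (h s'))
  have hT2 : T = ∑ s' ∈ Finset.univ.filter (fun s' => s' ≠ s0), F s' := by
    rw [hT]
    have hstep : ∀ s s' : S, (if A s s' then F s * PF s s' else 0)
        = (if A s s' then F s' * PB s s' else 0) := by
      intro s s'
      by_cases h : A s s'
      · simp [h, hDB s s' h]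
      · simp [h]
    simp_rw [hstep]
    rw [Finset.sum_comm, Finset.sum_filter]
    refine Finset.sum_congr rfl (fun s' _ => ?_)
    by_cases h : s' = s0
    · rw [if_neg (by simp [h])]
      subst h
      exact Finset.sum_eq_zero (fun s _ => if_neg (hinit s))
    · rw [if_pos h]
      calc ∑ s : S, (if A s s' then F s' * PB s s' else 0)
          = ∑ s ∈ Finset.univ.filter (fun s => A s s'), F s' * PB s s' := by
            rw [Finset.sum_filter]
        _ = F s' * ∑ s ∈ Finset.univ.filter (fun s => A s s'), PB s s' := by
            rw [Finset.mul_sum]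
        _ = F s' := by rw [hPBsum s' h, mul_one]
  have hsplit : ∑ x ∈ Finset.univ.filter (fun x => ∀ s', ¬ A x s'), F x
      = (∑ s : S, F s) - ∑ s ∈ Finset.univ.filter (fun s => ∃ s', A s s'), F s := by
    have := Finset.sum_filter_add_sum_filter_not Finset.univ
      (fun s => ∃ s', A s s') F
    have hcongr : ∑ x ∈ Finset.univ.filter (fun x => ¬ ∃ s', A x s'), F x
        = ∑ x ∈ Finset.univ.filter (fun x => ∀ s', ¬ A x s'), F x := by
      refine Finset.sum_congr ?_ (fun _ _ => rfl)
      apply Finset.filter_congr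
      intro x _
      simp [not_exists]
    linarith [this, hcongr]
  have hsplit2 : ∑ s' ∈ Finset.univ.filter (fun s' => s' ≠ s0), F s'
      = (∑ s : S, F s) - F s0 := by
    have := Finset.sum_filter_add_sum_filter_not Finset.univ (fun s' => s' ≠ s0) F
    have : ∑ s' ∈ Finset.univ.filter (fun s' => ¬ s' ≠ s0), F s' = F s0 := by
      have : Finset.univ.filter (fun s' => ¬ s' ≠ s0) = {s0} := by
        ext x; simp
      rw [this, Finset.sum_singleton]
    linarith [Finset.sum_filter_add_sum_filter_not Finset.univ (fun s' => s' ≠ s0) F, this]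
  rw [hsplit]
  rw [hT1] at hT2
  linarith [hT2, hsplit2]
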